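/- Let τ = 1/1000 and let p, w, k be positive integers with k ≤ τ·w·p (the paper takes k = τwp). Let x¹,…,x^w ∈ {−1,1}^p be such that there is a set W ⊆ {1,…,p} with |W| ≥ (1−τ)p of consensus columns (for each j ∈ W the j-th coordinate is the same across x¹,…,x^w). Let z₁,…,z_k ∈ {−1,1}^p satisfy Σ_{j=1}^k z_j z_jᵀ = k·I_p. Form the dataset D_n of n = w + k covariate–response pairs consisting of (x^l, 1) for l = 1,…,w and (z_j, 0) for j = 1,…,k. Let 0 < α₁ < √(1−τ)/(1+τ), let L(θ, D_n) = (1/(2n)) Σ over the n pairs of (response − covariateᵀθ)², let α_C = √p/α₁, let β_L = (1/n)‖Σ over all n covariates u of u·uᵀ‖₂ (operator norm), and let 0 < S₁ ≤ (√(1−τ) − (1+τ)α₁)/(α₁(1+τ)). Then every pair in D_n has |response| ≤ 1 and ‖covariate‖∞ ≤ 1, and inf_{‖θ‖₂ ≤ α₁/√p} α_C·‖∇L(θ, D_n)‖₂ / β_L ≥ S₁. -/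

import Mathlib

open scoped RealInnerProductSpace

private lemma stmt5_core (τ q u r wr kr α₁ : ℝ) (hτ0 : 0 < τ)
    (hwr : 0 < wr) (hu : 0 < u) (hr : 0 < r) (hα : 0 < α₁)
    (hkr : kr ≤ τ * wr * u^2) (hqu : q * u ≤ r) (hru : r ≤ u) (hτq : τ ≤ q)
    (hnum : 0 < q - (1 + τ) * α₁) :
    (q - (1 + τ) * α₁) * r * (wr * u^2 + kr) ≤
      (1 + τ) * u * (wr * (1 - α₁) * r^2 - kr * α₁) := by
  have hb1 : 0 ≤ r * (r - q * u) := mul_nonneg hr.le (by linarith)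
  have hg : τ * u ≤ q * u := mul_le_mul_of_nonneg_right hτq hu.le
  have hb2 : 0 ≤ α₁ * ((u - r) * (r - τ * u)) :=
    mul_nonneg hα.le (mul_nonneg (by linarith) (by linarith))
  have hb : 0 ≤ r * (r - q * u) + α₁ * ((u - r) * (r - τ * u)) := by linarith
  nlinarith [mul_nonneg (mul_nonneg (mul_nonneg hwr.le (by linarith : (0:ℝ) ≤ 1 + τ)) hu.le) hb,
    mul_nonneg (by linarith : (0:ℝ) ≤ τ * wr * u^2 - kr)
      (mul_nonneg (by linarith : (0:ℝ) ≤ 1 + τ) (mul_nonneg hu.le hα.le)),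
    mul_nonneg (by linarith : (0:ℝ) ≤ τ * wr * u^2 - kr)
      (mul_nonneg hnum.le hr.le)]

private lemma stmt5_step2 (q τ α₁ u r N wr kr : ℝ) (hα : 0 < α₁) (hN : 0 < N)
    (hcore : (q - (1 + τ) * α₁) * r * (wr * u^2 + kr) ≤
      (1 + τ) * u * (wr * (1 - α₁) * r^2 - kr * α₁)) :
    (q - (1 + τ) * α₁) * (wr * u^2 + kr) * (α₁ * N * r) ≤
      u * (wr * (1 - α₁) * r^2 - kr * α₁) * (α₁ * (1 + τ) * N) := by
  nlinarith [mul_le_mul_of_nonneg_left hcore (mul_pos hα hN).le]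


set_option maxHeartbeats 800000 in
/-- Proposition `MatchData` in the paper: the fingerprinting dataset (consensus rows with
response 1, orthogonal rows with response 0) satisfies the boundedness conditions and the
uniform gradient lower bound `inf_{‖θ‖₂ ≤ α₁/√p} α_C·‖∇L(θ, D_n)‖₂/β_L ≥ S₁`.
Here `β_L = (1/n)‖Σ u uᵀ‖₂` is characterized via
`IsLUB` of the values of the quadratic form `v ↦ (1/n)·Σ ⟨u, v⟩²` over the unit ball,
and `∇L(θ, D_n) = (1/n)·Σ (uᵀθ − y)·u` is the mean squared error loss gradient. -/
theorem stmt_5 {p w k : ℕ} (hp : 0 < p) (hw : 0 < w) (hk : 0 < k)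
    (τ : ℝ) (hτ : τ = 1 / 1000) (hkwp : (k : ℝ) ≤ τ * w * p)
    (n : ℕ) (hn : n = w + k)
    (x : Fin w → EuclideanSpace ℝ (Fin p))
    (hx : ∀ l j, x l j = 1 ∨ x l j = -1)
    (W : Finset (Fin p)) (hW : (1 - τ) * p ≤ (W.card : ℝ))
    (s : Fin p → ℝ)
    (hs : ∀ j ∈ W, (s j = 1 ∨ s j = -1) ∧ ∀ l, x l j = s j)
    (z : Fin k → EuclideanSpace ℝ (Fin p))
    (hz : ∀ j i, z j i = 1 ∨ z j i = -1)
    (hzorth : ∀ v : EuclideanSpace ℝ (Fin p), ∑ j, ⟪z j, v⟫ • z j = (k : ℝ) • v)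
    (α₁ : ℝ) (hα₁pos : 0 < α₁) (hα₁ : α₁ < Real.sqrt (1 - τ) / (1 + τ))
    (αC : ℝ) (hαC : αC = Real.sqrt p / α₁)
    (gradL : EuclideanSpace ℝ (Fin p) → EuclideanSpace ℝ (Fin p))
    (hgradL : ∀ θ, gradL θ = (n : ℝ)⁻¹ •
      ((∑ l, (⟪x l, θ⟫ - 1) • x l) + ∑ j, ⟪z j, θ⟫ • z j))
    (βL : ℝ)
    (hβL : IsLUB {c : ℝ | ∃ v : EuclideanSpace ℝ (Fin p), ‖v‖ ≤ 1 ∧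
      c = (n : ℝ)⁻¹ * ((∑ l, ⟪x l, v⟫ ^ 2) + ∑ j, ⟪z j, v⟫ ^ 2)} βL)
    (S₁ : ℝ) (hS₁pos : 0 < S₁)
    (hS₁ : S₁ ≤ (Real.sqrt (1 - τ) - (1 + τ) * α₁) / (α₁ * (1 + τ))) :
    -- responses of the dataset are bounded by 1 in absolute value
    (|(1 : ℝ)| ≤ 1 ∧ |(0 : ℝ)| ≤ 1) ∧
    -- covariates are bounded by 1 in the sup-norm
    (∀ l j, |x l j| ≤ 1) ∧ (∀ j i, |z j i| ≤ 1) ∧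
    -- the uniform gradient lower bound over the ball of radius `α₁/√p`
    (∀ θ : EuclideanSpace ℝ (Fin p), ‖θ‖ ≤ α₁ / Real.sqrt p →
      S₁ ≤ αC * ‖gradL θ‖ / βL) := by
  subst hαC hn
  have hτ0 : (0:ℝ) < τ := by rw [hτ]; norm_num
  have hτ1 : τ < 1 := by rw [hτ]; norm_num
  have hip : ∀ a b : EuclideanSpace ℝ (Fin p), ⟪a,b⟫ = ∑ j, a j * b j := by
    intro a b
    simp [PiLp.inner_apply, RCLike.inner_apply, conj_trivial, mul_comm]
  have hp' : (0:ℝ) < p := by exact_mod_cast hp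
  have hw' : (0:ℝ) < w := by exact_mod_cast hw
  have hk' : (0:ℝ) < k := by exact_mod_cast hk
  obtain ⟨u, hudef⟩ : ∃ u : ℝ, Real.sqrt p = u := ⟨_, rfl⟩
  obtain ⟨q, hqdef⟩ : ∃ q : ℝ, Real.sqrt (1 - τ) = q := ⟨_, rfl⟩
  obtain ⟨A, hAdef⟩ : ∃ A : ℝ, ((W.card : ℕ) : ℝ) = A := ⟨_, rfl⟩
  obtain ⟨r, hrdef⟩ : ∃ r : ℝ, Real.sqrt A = r := ⟨_, rfl⟩
  rw [hudef]
  rw [hqdef] at hα₁ hS₁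
  rw [hAdef] at hW
  have hu2 : u^2 = p := by rw [← hudef]; exact Real.sq_sqrt hp'.le
  have hupos : 0 < u := by rw [← hudef]; exact Real.sqrt_pos.2 hp'
  have hq2 : q^2 = 1 - τ := by rw [← hqdef]; exact Real.sq_sqrt (by linarith)
  have hqpos : 0 < q := by rw [← hqdef]; exact Real.sqrt_pos.2 (by linarith)
  have hApos : (0:ℝ) < A := lt_of_lt_of_le (by nlinarith) hW
  have hA2 : A ≤ (p:ℝ) := by
    rw [← hAdef]
    exact_mod_cast (Finset.card_le_univ W).trans_eq (by simp)
  have hr2 : r^2 = A := by rw [← hrdef]; exact Real.sq_sqrt hApos.le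
  have hrpos : 0 < r := by rw [← hrdef]; exact Real.sqrt_pos.2 hApos
  have hru : r ≤ u := by
    rw [← hrdef, ← hudef]; exact Real.sqrt_le_sqrt hA2
  have hqur : q * u ≤ r := by
    rw [← hrdef, ← hudef, ← hqdef, ← Real.sqrt_mul (by linarith)]
    exact Real.sqrt_le_sqrt hW
  have hN : ((w + k : ℕ) : ℝ) = (w : ℝ) + k := by push_cast; ring
  have hNpos : (0:ℝ) < ((w + k : ℕ) : ℝ) := by rw [hN]; linarith
  refine ⟨⟨by norm_num, by norm_num⟩, ?_, ?_, ?_⟩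
  · intro l j; rcases hx l j with h | h <;> rw [h] <;> norm_num
  · intro j i; rcases hz j i with h | h <;> rw [h] <;> norm_num
  have hnormx : ∀ l, ‖x l‖ = u := by
    intro l
    have h1 : ∀ j, ‖x l j‖^2 = 1 := by
      intro j; rcases hx l j with h | h <;> rw [h] <;> norm_num
    have h2 : ∑ j, ‖x l j‖^2 = (p:ℝ) := by
      rw [Finset.sum_congr rfl (fun j _ => h1 j)]; simp
    rw [EuclideanSpace.norm_eq, h2, hudef]
  -- βL bounds
  have hβL1 : 1 ≤ βL := by
    apply hβL.1
    refine ⟨EuclideanSpace.single ⟨0, hp⟩ 1, by simp [EuclideanSpace.norm_single], ?_⟩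
    have h1 : ∀ l, ⟪x l, EuclideanSpace.single ⟨0, hp⟩ (1:ℝ)⟫ ^ 2 = 1 := by
      intro l
      rw [hip, Finset.sum_eq_single (⟨0, hp⟩ : Fin p)]
      · rcases hx l ⟨0, hp⟩ with h | h <;> simp [h]
      · intro b _ hb; simp [EuclideanSpace.single_apply, hb]
      · simp
    have h2 : ∀ j, ⟪z j, EuclideanSpace.single ⟨0, hp⟩ (1:ℝ)⟫ ^ 2 = 1 := by
      intro j
      rw [hip, Finset.sum_eq_single (⟨0, hp⟩ : Fin p)]
      · rcases hz j ⟨0, hp⟩ with h | h <;> simp [h]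
      · intro b _ hb; simp [EuclideanSpace.single_apply, hb]
      · simp
    simp only [h1, h2, Finset.sum_const, Finset.card_univ, Fintype.card_fin,
      nsmul_eq_mul, mul_one]
    rw [hN]
    field_simp
  have hβLpos : (0:ℝ) < βL := lt_of_lt_of_le one_pos hβL1
  have hzsum : ∀ v : EuclideanSpace ℝ (Fin p), ∑ j, ⟪z j, v⟫ ^ 2 = k * ‖v‖^2 := by
    intro v
    have h : ∑ j, ⟪z j, v⟫ ^ 2 = ⟪∑ j, ⟪z j, v⟫ • z j, v⟫ := by
      rw [sum_inner]
      refine Finset.sum_congr rfl (fun j _ => ?_)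
      rw [real_inner_smul_left]; ring
    rw [h, hzorth, real_inner_smul_left, real_inner_self_eq_norm_sq]
  have hβL2 : βL ≤ ((w + k : ℕ) : ℝ)⁻¹ * (w * u^2 + k) := by
    apply hβL.2
    rintro c ⟨v, hv1, rfl⟩
    have hx2 : ∀ l : Fin w, ⟪x l, v⟫ ^ 2 ≤ u^2 := by
      intro l
      have h1 : |⟪x l, v⟫| ≤ ‖x l‖ * ‖v‖ := abs_real_inner_le_norm _ _
      have h2 : ‖x l‖ * ‖v‖ ≤ u := by
        rw [hnormx l]; nlinarith [norm_nonneg v]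
      calc ⟪x l, v⟫ ^ 2 = |⟪x l, v⟫|^2 := (sq_abs _).symm
        _ ≤ u^2 := by nlinarith [abs_nonneg (⟪x l, v⟫)]
    have hxs : ∑ l, ⟪x l, v⟫ ^ 2 ≤ w * u^2 := by
      calc ∑ l, ⟪x l, v⟫ ^ 2 ≤ ∑ _l : Fin w, u^2 :=
            Finset.sum_le_sum (fun l _ => hx2 l)
        _ = w * u^2 := by rw [Finset.sum_const]; simp
    have hzs : ∑ j, ⟪z j, v⟫ ^ 2 ≤ k := by
      rw [hzsum v]
      have hv2 : ‖v‖^2 ≤ 1 := by nlinarith [norm_nonneg v]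
      nlinarith
    have hNi : (0:ℝ) < ((w + k : ℕ) : ℝ)⁻¹ := by positivity
    exact mul_le_mul_of_nonneg_left (by linarith) hNi.le
  -- main inequality
  intro θ hθ
  obtain ⟨v, hvdef⟩ : ∃ v : EuclideanSpace ℝ (Fin p),
      ∀ j, v j = if j ∈ W then s j else 0 :=
    ⟨(WithLp.equiv 2 (Fin p → ℝ)).symm (fun j => if j ∈ W then s j else 0), fun j => rfl⟩
  have hnv : ‖v‖ = r := by
    have h1 : ∀ j, ‖v j‖^2 = if j ∈ W then 1 else 0 := by
      intro j
      by_cases hj : j ∈ W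
      · rcases (hs j hj).1 with h | h <;> simp [hvdef, hj, h]
      · simp [hvdef, hj]
    have h2 : ∑ j, ‖v j‖^2 = A := by
      rw [Finset.sum_congr rfl (fun j _ => h1 j), ← hAdef]
      simp
    rw [EuclideanSpace.norm_eq, h2, hrdef]
  have hxv : ∀ l, ⟪x l, v⟫ = A := by
    intro l
    rw [hip]
    have h1 : ∀ j, x l j * v j = if j ∈ W then 1 else 0 := by
      intro j
      by_cases hj : j ∈ W
      · have hc := (hs j hj).2 l
        rcases (hs j hj).1 with h | h <;> simp [hvdef, hj, hc, h]
      · simp [hvdef, hj]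
    rw [Finset.sum_congr rfl (fun j _ => h1 j), ← hAdef]
    simp
  have hgv : ⟪gradL θ, v⟫ = ((w + k : ℕ) : ℝ)⁻¹ *
      ((∑ l, (⟪x l, θ⟫ - 1) * A) + k * ⟪θ, v⟫) := by
    rw [hgradL, real_inner_smul_left, inner_add_left, sum_inner]
    congr 2
    · refine Finset.sum_congr rfl (fun l _ => ?_)
      rw [real_inner_smul_left, hxv l]
    · rw [sum_inner]
      have h : ∑ j, ⟪⟪z j, θ⟫ • z j, v⟫ = ∑ j, ⟪⟪z j, v⟫ • z j, θ⟫ := by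
        refine Finset.sum_congr rfl (fun j _ => ?_)
        rw [real_inner_smul_left, real_inner_smul_left]
        ring
      rw [h, ← sum_inner, hzorth, real_inner_smul_left, real_inner_comm]
  have hθn : ‖θ‖ ≤ α₁ / u := hθ
  have hxθ : ∀ l, ⟪x l, θ⟫ ≤ α₁ := by
    intro l
    calc ⟪x l, θ⟫ ≤ ‖x l‖ * ‖θ‖ := real_inner_le_norm _ _
      _ ≤ u * (α₁ / u) := by
          rw [hnormx l]
          exact mul_le_mul_of_nonneg_left hθn hupos.le
      _ = α₁ := by field_simp
  have hθv : (k:ℝ) * ⟪θ, v⟫ ≤ k * α₁ := by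
    have h1 : ⟪θ, v⟫ ≤ ‖θ‖ * ‖v‖ := real_inner_le_norm _ _
    have h2 : ‖θ‖ * ‖v‖ ≤ (α₁ / u) * u :=
      mul_le_mul hθn (by rw [hnv]; exact hru) (norm_nonneg v) (by positivity)
    have h3 : (α₁ / u) * u = α₁ := by field_simp
    nlinarith
  have hsumx : ∑ l, (⟪x l, θ⟫ - 1) * A ≤ w * ((α₁ - 1) * A) := by
    calc ∑ l, (⟪x l, θ⟫ - 1) * A ≤ ∑ _l : Fin w, (α₁ - 1) * A :=
          Finset.sum_le_sum (fun l _ =>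
            mul_le_mul_of_nonneg_right (by linarith [hxθ l]) hApos.le)
      _ = w * ((α₁ - 1) * A) := by rw [Finset.sum_const]; simp
  have hgvle : ⟪gradL θ, v⟫ ≤ ((w + k : ℕ) : ℝ)⁻¹ * (w * ((α₁ - 1) * A) + k * α₁) := by
    rw [hgv]
    exact mul_le_mul_of_nonneg_left (by linarith) (by positivity)
  have hinner_norm : -(‖gradL θ‖ * r) ≤ ⟪gradL θ, v⟫ := by
    have h1 := abs_real_inner_le_norm (gradL θ) v
    have h2 := neg_abs_le (⟪gradL θ, v⟫)
    rw [hnv] at h1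
    linarith
  have h3 : ((w + k : ℕ) : ℝ)⁻¹ * (w * (1 - α₁) * A - k * α₁) ≤ ‖gradL θ‖ * r := by
    have he : -(((w + k : ℕ) : ℝ)⁻¹ * (w * ((α₁ - 1) * A) + k * α₁)) =
        ((w + k : ℕ) : ℝ)⁻¹ * (w * (1 - α₁) * A - k * α₁) := by ring
    linarith
  have hτpos : (0:ℝ) < 1 + τ := by linarith
  have hnum_pos : 0 < q - (1 + τ) * α₁ := by
    rw [lt_div_iff₀ hτpos] at hα₁
    linarith
  have hqτ : τ ≤ q := by
    have hτ2 : τ^2 ≤ 1 - τ := by rw [hτ]; norm_num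
    calc τ = Real.sqrt (τ^2) := (Real.sqrt_sq hτ0.le).symm
      _ ≤ Real.sqrt (1 - τ) := Real.sqrt_le_sqrt hτ2
      _ = q := hqdef
  have hcore : (q - (1 + τ) * α₁) * r * (w * u^2 + k) ≤
      (1 + τ) * u * (w * (1 - α₁) * r^2 - k * α₁) := by
    apply stmt5_core τ q u r w k α₁ hτ0 hw' hupos hrpos hα₁pos _ hqur hru hqτ hnum_pos
    rw [hu2]; exact hkwp
  rw [le_div_iff₀ hβLpos]
  have hTpos : 0 < (q - (1 + τ) * α₁) / (α₁ * (1 + τ)) :=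
    div_pos hnum_pos (by positivity)
  have hstep1 : S₁ * βL ≤ ((q - (1 + τ) * α₁) / (α₁ * (1 + τ))) *
      (((w + k : ℕ) : ℝ)⁻¹ * (w * u^2 + k)) :=
    mul_le_mul hS₁ hβL2 hβLpos.le hTpos.le
  have hstep2 : ((q - (1 + τ) * α₁) / (α₁ * (1 + τ))) *
      (((w + k : ℕ) : ℝ)⁻¹ * (w * u^2 + k)) ≤
      (u / α₁) * ((((w + k : ℕ) : ℝ)⁻¹ * (w * (1 - α₁) * A - k * α₁)) / r) := by
    rw [← hr2]
    have e1 : ((q - (1 + τ) * α₁) / (α₁ * (1 + τ))) *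
        (((w + k : ℕ) : ℝ)⁻¹ * (w * u^2 + k)) =
        ((q - (1 + τ) * α₁) * (w * u^2 + k)) / (α₁ * (1 + τ) * ((w + k : ℕ) : ℝ)) := by
      field_simp
    have e2 : (u / α₁) * ((((w + k : ℕ) : ℝ)⁻¹ * (w * (1 - α₁) * r^2 - k * α₁)) / r) =
        (u * (w * (1 - α₁) * r^2 - k * α₁)) / (α₁ * ((w + k : ℕ) : ℝ) * r) := by
      rw [inv_mul_eq_div, div_div, div_mul_div_comm]
      ring
    rw [e1, e2, div_le_div_iff₀ (by positivity) (by positivity)]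
    exact stmt5_step2 q τ α₁ u r _ w k hα₁pos hNpos hcore
  have hstep3 : (u / α₁) * ((((w + k : ℕ) : ℝ)⁻¹ * (w * (1 - α₁) * A - k * α₁)) / r) ≤
      (u / α₁) * ‖gradL θ‖ := by
    refine mul_le_mul_of_nonneg_left ?_ (by positivity)
    rw [div_le_iff₀ hrpos]
    exact h3
  calc S₁ * βL ≤ _ := hstep1
    _ ≤ _ := hstep2
    _ ≤ (u / α₁) * ‖gradL θ‖ := hstep3
    _ = u / α₁ * ‖gradL θ‖ := rfl
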